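/- An integer matrix A ∈ Z^{d×n} with entries bounded by m has Kruskal rank less than k (over Q) if and only if there exists a nonempty subset U ⊆ [n] with |U| ≤ k and a nonzero integer coefficient vector α indexed by U, with all |α_i| ≤ ((k-1)!·m^{k-1})^2, such that Σ_{j∈U} α_j · A_j = 0, where A_j denotes column j of A. -/

import Mathlib

open Matrix in
/-- If the columns of a `d × ι` rational matrix are linearly independent, there is a
choice of rows making an invertible square matrix. -/
lemma exists_rows_det_ne_zero {d : ℕ} {ι : Type*} [Fintype ι] [DecidableEq ι]
    (M : Matrix (Fin d) ι ℚ) (h : LinearIndependent ℚ (fun j => Mᵀ j)) :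
    ∃ ρ : ι → Fin d, (Matrix.of (fun a j => M (ρ a) j) : Matrix ι ι ℚ).det ≠ 0 := by
  have hinj : Function.Injective M.mulVec := Matrix.mulVec_injective_iff.mpr h
  have hrank : M.rank = Fintype.card ι := by
    rw [Matrix.rank, LinearMap.finrank_range_of_inj hinj]
    simp [Module.finrank_pi]
  have hspan : Submodule.span ℚ (Set.range (fun i => M i)) = ⊤ := by
    apply Submodule.eq_top_of_finrank_eq
    have := M.rank_transpose
    rw [Matrix.rank_eq_finrank_span_cols, Matrix.col, Matrix.transpose_transpose] at this
    rw [show (Set.range fun i => M i) = Set.range M from rfl, this, hrank]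
    simp [Module.finrank_pi]
  obtain ⟨b, hbsub, hbspan, hbind⟩ := exists_linearIndependent ℚ (Set.range (fun i => M i))
  rw [hspan] at hbspan
  let B : Module.Basis b ℚ (ι → ℚ) := Module.Basis.mk hbind (by rw [Subtype.range_coe, hbspan])
  haveI : Fintype b := FiniteDimensional.fintypeBasisIndex B
  have hcard : Fintype.card b = Fintype.card ι := by
    have := Module.finrank_eq_card_basis B
    simp [Module.finrank_pi] at this
    rw [← Nat.card_coe_set_eq, Nat.card_eq_fintype_card] at this
    omega
  let e : ι ≃ b := (Fintype.equivOfCardEq hcard).symm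
  have hpick : ∀ w : b, ∃ i : Fin d, M i = (w : ι → ℚ) := fun w => hbsub w.2
  choose f hf using hpick
  refine ⟨fun a => f (e a), ?_⟩
  have hrows : LinearIndependent ℚ
      (fun a : ι => (Matrix.of (fun a j => M (f (e a)) j) : Matrix ι ι ℚ) a) := by
    have : (fun a : ι => (Matrix.of (fun a j => M (f (e a)) j) : Matrix ι ι ℚ) a)
        = (fun w : b => (w : ι → ℚ)) ∘ e := by
      funext a; exact hf (e a)
    rw [this]
    exact hbind.comp e e.injective
  have := Matrix.linearIndependent_rows_iff_isUnit.mp hrows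
  rw [Matrix.isUnit_iff_isUnit_det] at this
  exact IsUnit.ne_zero this

lemma extend_dep {n : ℕ} {V : Type*} [AddCommGroup V] [Module ℚ V] (v : Fin n → V)
    (T : Finset (Fin n)) (g : T → ℚ) (hsum : ∑ j : T, g j • v (j : Fin n) = 0) :
    ∃ β : Fin n → ℚ, (∀ j, β j ≠ 0 → j ∈ T) ∧ (∀ j : T, β (j : Fin n) = g j) ∧
      ∑ j : Fin n, β j • v j = 0 := by
  classical
  refine ⟨fun j => if h : j ∈ T then g ⟨j, h⟩ else 0, ?_, ?_, ?_⟩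
  · intro j hj
    by_contra hc
    simp [hc] at hj
  · intro j
    simp [j.2]
  · have h1 : ∑ j : Fin n, (if h : j ∈ T then g ⟨j, h⟩ else 0) • v j
        = ∑ j ∈ T, (if h : j ∈ T then g ⟨j, h⟩ else 0) • v j := by
      refine (Finset.sum_subset (Finset.subset_univ T) ?_).symm
      intro x _ hx
      simp [hx]
    rw [h1, ← Finset.sum_coe_sort T (fun j => (if h : j ∈ T then g ⟨j, h⟩ else 0) • v j)]
    rw [← hsum]
    apply Finset.sum_congr rfl
    intro j _
    simp [j.2]

lemma int_det_bound {ι : Type*} [Fintype ι] [DecidableEq ι] (Q : Matrix ι ι ℤ) (m : ℤ)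
    (hQ : ∀ a j, |Q a j| ≤ m) :
    |Q.det| ≤ ((Fintype.card ι).factorial : ℤ) * m ^ Fintype.card ι := by
  have := Matrix.det_le (A := Q) (abv := AbsoluteValue.abs) (x := m) hQ
  simpa [nsmul_eq_mul] using this

lemma bound_chain {k r : ℕ} {m : ℤ} (hm : 1 ≤ m) (hr : r ≤ k - 1) :
    (r.factorial : ℤ) * m ^ r ≤ (((k - 1).factorial : ℤ) * m ^ (k - 1)) ^ 2 := by
  have h1 : (r.factorial : ℤ) ≤ ((k - 1).factorial : ℤ) := by
    exact_mod_cast Nat.factorial_le hr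
  have h2 : m ^ r ≤ m ^ (k - 1) := pow_le_pow_right₀ hm hr
  have hfpos : (1 : ℤ) ≤ ((k - 1).factorial : ℤ) := by exact_mod_cast (k-1).factorial_pos
  have hmp : (0:ℤ) < m ^ r := pow_pos (lt_of_lt_of_le zero_lt_one hm) r
  have hX1 : (1:ℤ) ≤ ((k - 1).factorial : ℤ) * m ^ (k - 1) := by
    have : (1:ℤ) ≤ m ^ (k-1) := one_le_pow₀ hm
    nlinarith
  calc (r.factorial : ℤ) * m ^ r ≤ ((k - 1).factorial : ℤ) * m ^ (k - 1) := by
        apply mul_le_mul h1 h2 hmp.le (by positivity)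
    _ ≤ (((k - 1).factorial : ℤ) * m ^ (k - 1)) ^ 2 := le_self_pow₀ hX1 (by norm_num)

open Matrix in
theorem harddir (d n k : ℕ) (m : ℤ) (hm : 1 ≤ m)
    (A : Matrix (Fin d) (Fin n) ℤ) (hA : ∀ i j, |A i j| ≤ m)
    (S : Finset (Fin n)) (hSk : S.card ≤ k)
    (hdep : ¬ LinearIndependent ℚ
      (fun j : S => (A.map (Int.cast : ℤ → ℚ)).transpose (j : Fin n))) :
    (∃ U : Finset (Fin n), U.Nonempty ∧ U.card ≤ k ∧
        ∃ α : Fin n → ℤ, α ≠ 0 ∧ (∀ j ∉ U, α j = 0) ∧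
          (∀ j, |α j| ≤ (((k - 1).factorial : ℤ) * m ^ (k - 1)) ^ 2) ∧
          ∑ j ∈ U, α j • A.transpose j = 0) := by
  classical
  set Mq : Matrix (Fin d) (Fin n) ℚ := A.map (Int.cast : ℤ → ℚ) with hMq
  set v : Fin n → (Fin d → ℚ) := fun j => Mq.transpose j with hv
  rw [Fintype.not_linearIndependent_iff] at hdep
  obtain ⟨g, hgsum, jstar, hgstar⟩ := hdep
  obtain ⟨β0, hβ0supp, hβ0eq, hβ0sum⟩ := extend_dep v S g hgsum
  set Good : (Fin n → ℚ) → Prop := fun β =>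
    β ≠ 0 ∧ (∀ j, β j ≠ 0 → j ∈ S) ∧ ∑ j : Fin n, β j • v j = 0 with hGood
  set supp : (Fin n → ℚ) → Finset (Fin n) :=
    fun β => Finset.univ.filter (fun j => β j ≠ 0) with hsupp
  have hβ0ne : β0 ≠ 0 := by
    intro hc
    apply hgstar
    rw [← hβ0eq jstar, hc]
    rfl
  have hex : ∃ c : ℕ, ∃ β, Good β ∧ (supp β).card = c :=
    ⟨_, β0, ⟨hβ0ne, hβ0supp, hβ0sum⟩, rfl⟩
  obtain ⟨β, hβGood, hβcard⟩ := Nat.find_spec hex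
  obtain ⟨hβne, hβS, hβsum⟩ := hβGood
  have hmin : ∀ β', Good β' → Nat.find hex ≤ (supp β').card :=
    fun β' h' => Nat.find_le ⟨β', h', rfl⟩
  set F : Finset (Fin n) := supp β with hF
  have hmemF : ∀ j, j ∈ F ↔ β j ≠ 0 := by
    intro j; simp [hF, hsupp]
  obtain ⟨j0, hj0⟩ : ∃ j, β j ≠ 0 := by
    by_contra hc; push_neg at hc; exact hβne (funext hc)
  have hj0F : j0 ∈ F := (hmemF j0).mpr hj0
  have hFS : F ⊆ S := fun j hj => hβS j ((hmemF j).mp hj)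
  have hFk : F.card ≤ k := le_trans (Finset.card_le_card hFS) hSk
  set W : Finset (Fin n) := F.erase j0 with hW
  have hj0W : j0 ∉ W := Finset.notMem_erase _ _
  have hWcard : W.card = F.card - 1 := Finset.card_erase_of_mem hj0F
  have hFpos : 0 < F.card := Finset.card_pos.mpr ⟨j0, hj0F⟩
  have hWmem : ∀ j, j ∈ W → β j ≠ 0 := fun j hj => (hmemF j).mp (Finset.erase_subset _ _ hj)
  have hFinsert : F = insert j0 W := (Finset.insert_erase hj0F).symm
  -- columns indexed by W are linearly independent over ℚ
  have hWind : LinearIndependent ℚ (fun j : W => v (j : Fin n)) := by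
    by_contra hcon
    rw [Fintype.not_linearIndependent_iff] at hcon
    obtain ⟨g', hg'sum, j1, hj1⟩ := hcon
    obtain ⟨β', hβ'supp, hβ'eq, hβ'sum⟩ := extend_dep v W g' hg'sum
    have hβ'ne : β' ≠ 0 := by
      intro hc
      apply hj1
      rw [← hβ'eq j1, hc]
      rfl
    have hGood' : Good β' :=
      ⟨hβ'ne, fun j hj => hFS (Finset.erase_subset _ _ (hβ'supp j hj)), hβ'sum⟩
    have h1 : Nat.find hex ≤ (supp β').card := hmin β' hGood'
    have h2 : supp β' ⊆ W := by
      intro j hj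
      rw [hsupp] at hj
      simp only [Finset.mem_filter] at hj
      exact hβ'supp j hj.2
    have h3 : (supp β').card ≤ W.card := Finset.card_le_card h2
    have h4 : F.card = Nat.find hex := hβcard
    omega
  -- choose rows giving an invertible square submatrix
  obtain ⟨ρ, hdet⟩ := exists_rows_det_ne_zero
    (Matrix.of (fun i (j : W) => Mq i (j : Fin n))) (by exact hWind)
  set Qz : Matrix W W ℤ := Matrix.of (fun a j => A (ρ a) (j : Fin n)) with hQz
  have hcast : (Matrix.of (fun a j => (Matrix.of (fun i (j : W) => Mq i (j : Fin n))) (ρ a) j)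
       : Matrix W W ℚ) = Qz.map (Int.cast : ℤ → ℚ) := by
    rfl
  have hdetq : (Qz.map (Int.cast : ℤ → ℚ)).det ≠ 0 := by rw [← hcast]; exact hdet
  have hdetz : Qz.det ≠ 0 := by
    intro hc
    rw [show Qz.map (Int.cast : ℤ → ℚ) = (Int.castRingHom ℚ).mapMatrix Qz from rfl,
      ← RingHom.map_det] at hdetq
    simp [hc] at hdetq
  set b0 : W → ℤ := fun a => A (ρ a) j0 with hb0
  set cvec : W → ℤ := Qz.cramer (-b0) with hcvec
  have hcr : Qz *ᵥ cvec = Qz.det • (-b0) := Matrix.mulVec_cramer _ _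
  -- the integer coefficient vector
  set α : Fin n → ℤ := fun j => if h : j ∈ W then cvec ⟨j, h⟩ else
    if j = j0 then Qz.det else 0 with hα
  have hαj0 : α j0 = Qz.det := by simp [hα, hj0W]
  have hαW : ∀ j : W, α (j : Fin n) = cvec j := by
    intro j; simp [hα, j.2]
  have hαout : ∀ j, j ∉ F → α j = 0 := by
    intro j hj
    have h1 : j ∉ W := fun hc => hj (Finset.erase_subset _ _ hc)
    have h2 : j ≠ j0 := fun hc => hj (hc ▸ hj0F)
    simp [hα, h1, h2]
  -- cardinality facts
  have hcardW : Fintype.card W = W.card := Fintype.card_coe W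
  have hrk : W.card ≤ k - 1 := by omega
  -- the determinant bounds
  have hQbd : ∀ a j, |Qz a j| ≤ m := fun a j => hA _ _
  have hdetbd : |Qz.det| ≤ (((k - 1).factorial : ℤ) * m ^ (k - 1)) ^ 2 := by
    refine le_trans (int_det_bound Qz m hQbd) ?_
    rw [hcardW]
    exact bound_chain hm hrk
  have hcvecbd : ∀ j : W, |cvec j| ≤ (((k - 1).factorial : ℤ) * m ^ (k - 1)) ^ 2 := by
    intro j
    have : cvec j = (Qz.updateCol j (-b0)).det := by
      rw [hcvec, Matrix.cramer_apply]
    rw [this]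
    refine le_trans (int_det_bound _ m ?_) ?_
    · intro a j'
      rw [Matrix.updateCol_apply]
      split_ifs
      · simpa using hA (ρ a) j0
      · exact hA _ _
    · rw [hcardW]
      exact bound_chain hm hrk
  have hbd : ∀ j, |α j| ≤ (((k - 1).factorial : ℤ) * m ^ (k - 1)) ^ 2 := by
    intro j
    by_cases h1 : j ∈ W
    · rw [show α j = cvec ⟨j, h1⟩ from hαW ⟨j, h1⟩]
      exact hcvecbd _
    · by_cases h2 : j = j0
      · rw [h2, hαj0]; exact hdetbd
      · have : α j = 0 := by simp [hα, h1, h2]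
        rw [this, abs_zero]
        positivity
  -- key linear relations
  have keyA : ∀ a : W, ∑ j : W, (Qz a j : ℚ) * (cvec j : ℚ)
      = (Qz.det : ℚ) * (-(b0 a : ℚ)) := by
    intro a
    have h1 := congrFun hcr a
    simp only [Matrix.mulVec, dotProduct, Pi.smul_apply, Pi.neg_apply,
      smul_eq_mul] at h1
    exact_mod_cast congrArg (fun z : ℤ => (z : ℚ)) h1
  have keyB : ∀ i : Fin d, ∑ j : W, β (j : Fin n) * Mq i (j : Fin n)
      = -(β j0 * Mq i j0) := by
    intro i
    have h1 := congrFun hβsum i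
    simp only [Finset.sum_apply, Pi.smul_apply, Pi.zero_apply, smul_eq_mul] at h1
    have h2 : ∑ j : Fin n, β j * Mq i j = 0 := h1
    have h3 : ∑ j ∈ F, β j * Mq i j = 0 := by
      rw [← h2]
      refine Finset.sum_subset (Finset.subset_univ F) ?_
      intro x _ hx
      have hb : β x = 0 := by
        by_contra hc
        exact hx ((hmemF x).mpr hc)
      simp [hb]
    rw [hFinsert, Finset.sum_insert hj0W,
      ← Finset.sum_coe_sort W (fun j => β j * Mq i j)] at h3
    linarith
  -- the difference of the two coefficient vectors vanishes
  set γ : Fin n → ℚ := fun j => β j0 * (α j : ℚ) - (Qz.det : ℚ) * β j with hγ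
  have hγW : ∀ j : W, γ (j : Fin n) = 0 := by
    have hNinj : Function.Injective (Qz.map (Int.cast : ℤ → ℚ)).mulVec :=
      Matrix.mulVec_injective_iff_isUnit.mpr
        ((Matrix.isUnit_iff_isUnit_det _).mpr (isUnit_iff_ne_zero.mpr hdetq))
    have hN0 : (Qz.map (Int.cast : ℤ → ℚ)) *ᵥ (fun j : W => γ (j : Fin n)) = 0 := by
      funext a
      simp only [Matrix.mulVec, dotProduct, Pi.zero_apply, Matrix.map_apply]
      have e2 : ∑ j : W, (Qz a j : ℚ) * γ (j : Fin n)
          = β j0 * (∑ j : W, (Qz a j : ℚ) * (cvec j : ℚ))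
            - (Qz.det : ℚ) * (∑ j : W, β (j : Fin n) * (Qz a j : ℚ)) := by
        rw [Finset.mul_sum, Finset.mul_sum, ← Finset.sum_sub_distrib]
        apply Finset.sum_congr rfl
        intro j _
        have hc : ((α (j : Fin n) : ℤ) : ℚ) = (cvec j : ℚ) := by
          rw [hαW j]
        simp only [hγ]
        rw [← hc]
        ring
      have e3 : ∑ j : W, β (j : Fin n) * (Qz a j : ℚ) = -(β j0 * (b0 a : ℚ)) :=
        keyB (ρ a)
      rw [e2, keyA a, e3]
      ring
    have hz : (fun j : W => γ (j : Fin n)) = 0 := by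
      apply hNinj
      rw [hN0, Matrix.mulVec_zero]
    intro j
    exact congrFun hz j
  have hγ0 : ∀ j, β j0 * (α j : ℚ) = (Qz.det : ℚ) * β j := by
    intro j
    by_cases h1 : j ∈ W
    · have := hγW ⟨j, h1⟩
      simp only [hγ] at this
      linarith
    · by_cases h2 : j = j0
      · subst h2; rw [hαj0]; ring
      · have hjF : j ∉ F := by
          rw [hFinsert]
          simp [h1, h2]
        have hb : β j = 0 := by
          by_contra hc
          exact hjF ((hmemF j).mpr hc)
        rw [hαout j hjF, hb]
        simp
  -- the rational-valued relation for α
  have hFsum : ∑ j ∈ F, β j • v j = 0 := by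
    rw [← hβsum]
    refine Finset.sum_subset (Finset.subset_univ F) ?_
    intro x _ hx
    have hb : β x = 0 := by
      by_contra hc
      exact hx ((hmemF x).mpr hc)
    simp [hb]
  have hsumq : ∑ j ∈ F, (α j : ℚ) • v j = 0 := by
    have h1 : β j0 • ∑ j ∈ F, (α j : ℚ) • v j = 0 := by
      rw [Finset.smul_sum]
      have e : ∀ j ∈ F, β j0 • ((α j : ℚ) • v j) = (Qz.det : ℚ) • (β j • v j) := by
        intro j _
        rw [smul_smul, smul_smul, hγ0 j]
      rw [Finset.sum_congr rfl e, ← Finset.smul_sum, hFsum, smul_zero]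
    exact (smul_eq_zero.mp h1).resolve_left hj0
  -- conclusion
  refine ⟨F, ⟨j0, hj0F⟩, hFk, α, ?_, fun j hj => hαout j hj, hbd, ?_⟩
  · intro hc
    apply hdetz
    rw [← hαj0, hc]
    rfl
  · funext i
    have h1 := congrFun hsumq i
    simp only [Finset.sum_apply, Pi.smul_apply, Pi.zero_apply, smul_eq_mul] at h1
    have h2 : ((∑ j ∈ F, α j * A i j : ℤ) : ℚ) = 0 := by
      push_cast
      exact h1
    have h3 : (∑ j ∈ F, α j * A i j : ℤ) = 0 := by exact_mod_cast h2
    simpa [Finset.sum_apply, Matrix.transpose_apply, smul_eq_mul] using h3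


theorem easydir (d n k : ℕ) (m : ℤ)
    (A : Matrix (Fin d) (Fin n) ℤ)
    (U : Finset (Fin n)) (hUk : U.card ≤ k)
    (α : Fin n → ℤ) (hα0 : α ≠ 0) (hαsupp : ∀ j ∉ U, α j = 0)
    (hαsum : ∑ j ∈ U, α j • A.transpose j = 0) :
    (∃ S : Finset (Fin n), S.card ≤ k ∧
        ¬ LinearIndependent ℚ
          (fun j : S => (A.map (Int.cast : ℤ → ℚ)).transpose (j : Fin n))) := by
  refine ⟨U, hUk, ?_⟩
  rw [Fintype.not_linearIndependent_iff]
  refine ⟨fun j => (α j : ℚ), ?_, ?_⟩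
  · have h0 : ∀ i, ∑ j ∈ U, (α j : ℚ) * (A i j : ℚ) = 0 := by
      intro i
      have := congrFun hαsum i
      simp only [Finset.sum_apply, Pi.smul_apply, Pi.zero_apply, smul_eq_mul,
        Matrix.transpose_apply] at this
      exact_mod_cast this
    rw [Finset.sum_coe_sort U
      (fun j => ((α j : ℚ) • (A.map (Int.cast : ℤ → ℚ)).transpose j))]
    funext i
    simp only [Finset.sum_apply, Pi.smul_apply, smul_eq_mul, Matrix.transpose_apply,
      Matrix.map_apply, Pi.zero_apply]
    exact h0 i
  · obtain ⟨j, hj⟩ : ∃ j, α j ≠ 0 := by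
      by_contra hc
      push_neg at hc
      exact hα0 (funext hc)
    have hjU : j ∈ U := by
      by_contra hc
      exact hj (hαsupp j hc)
    refine ⟨⟨j, hjU⟩, ?_⟩
    simpa using hj



/-- An integer matrix with entries bounded by `m ≥ 1` has Kruskal rank less than `k`
over `ℚ` iff there is a nonempty subset `U` of at most `k` columns and a nonzero
integer coefficient vector supported on `U`, with coefficients bounded by
`((k-1)!·m^{k-1})²`, witnessing a linear dependence of the columns in `U`. -/
theorem kruskalRank_lt_iff_bounded_dependence (d n k : ℕ) (m : ℤ) (hm : 1 ≤ m)
    (A : Matrix (Fin d) (Fin n) ℤ) (hA : ∀ i j, |A i j| ≤ m) :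
    (∃ S : Finset (Fin n), S.card ≤ k ∧
        ¬ LinearIndependent ℚ
          (fun j : S => (A.map (Int.cast : ℤ → ℚ)).transpose (j : Fin n))) ↔
      (∃ U : Finset (Fin n), U.Nonempty ∧ U.card ≤ k ∧
        ∃ α : Fin n → ℤ, α ≠ 0 ∧ (∀ j ∉ U, α j = 0) ∧
          (∀ j, |α j| ≤ (((k - 1).factorial : ℤ) * m ^ (k - 1)) ^ 2) ∧
          ∑ j ∈ U, α j • A.transpose j = 0) := by
  constructor
  · rintro ⟨S, hSk, hdep⟩
    exact harddir d n k m hm A hA S hSk hdep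
  · rintro ⟨U, hUne, hUk, α, hα0, hαsupp, hαbd, hαsum⟩
    exact easydir d n k m A U hUk α hα0 hαsupp hαsum
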